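/- arXiv:2508.12849 — 2 statements merged into one kernel-verified Lean document; each statement's English description precedes it below -/
import Mathlib

section
/- Let G be a finite group generated by involutions g₀,…,g_d, p ∈ (0,1), and define Tᵢ(P) = P·(p·1 + (1−p)·gᵢ) on ℝ[G]. Suppose a finite sequence (ι₁,…,ι_m) of indices contains every index in {0,…,d} at least once. Then there exists a constant c < 1 such that ‖T_{ι_m}⋯T_{ι_1} P‖ ≤ c‖P‖ for every P ∈ ℝ[G] orthogonal to the uniform element 𝟙. -/
open scoped RealInnerProductSpace

/-- If a finite group `G` is generated by involutions `g₀, …, g_d`, `p ∈ (0,1)`,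
`Tᵢ(P) = P·(p·1 + (1-p)·gᵢ)`, and the sequence `ι₁, …, ι_m` of indices contains
every index at least once, then there is `c < 1` with
`‖T_{ι_m} ⋯ T_{ι_1} P‖ ≤ c‖P‖` for every `P` orthogonal to the uniform element. -/
theorem stmt3 (G : Type) [Group G] [Fintype G] [DecidableEq G]
    (d m : ℕ) (g : Fin (d + 1) → G) (hg : ∀ i, g i * g i = 1)
    (hgen : Subgroup.closure (Set.range g) = ⊤)
    (p : ℝ) (hp : p ∈ Set.Ioo (0 : ℝ) 1)
    (T : Fin (d + 1) → EuclideanSpace ℝ G →ₗ[ℝ] EuclideanSpace ℝ G)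
    (hT : ∀ i (P : EuclideanSpace ℝ G) (w : G),
      T i P w = p * P w + (1 - p) * P (w * g i))
    (ι : Fin m → Fin (d + 1)) (hι : Function.Surjective ι) :
    ∃ c : ℝ, c < 1 ∧ ∀ P : EuclideanSpace ℝ G,
      ⟪P, (WithLp.toLp 2 (fun _ => 1 / (Fintype.card G : ℝ)) : EuclideanSpace ℝ G)⟫ = 0 →
      ‖(List.ofFn ι).foldl (fun Q i => T i Q) P‖ ≤ c * ‖P‖ := by
  obtain ⟨hp0, hp1⟩ := hp
  have hpp : 0 < p * (1 - p) := mul_pos hp0 (by linarith)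
  set u : EuclideanSpace ℝ G :=
    (WithLp.toLp 2 (fun _ => 1 / (Fintype.card G : ℝ)) : EuclideanSpace ℝ G) with hu
  -- key identity
  have key : ∀ i (P : EuclideanSpace ℝ G),
      ⟪T i P, T i P⟫ = ⟪P, P⟫ - p * (1 - p) * ∑ w : G, (P w - P (w * g i))^2 := by
    intro i P
    have hB : ∑ w : G, (P (w * g i))^2 = ∑ w : G, (P w)^2 :=
      Equiv.sum_comp (Equiv.mulRight (g i)) (fun w => (P w)^2)
    simp only [PiLp.inner_apply, RCLike.inner_apply, starRingEnd_apply, star_trivial, hT]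
    have expand : ∑ w : G, (p * P w + (1 - p) * P (w * g i)) * (p * P w + (1 - p) * P (w * g i))
        = ∑ w : G, ((P w * P w - p * (1 - p) * (P w - P (w * g i))^2)
            + (1 - p) * ((P (w * g i))^2 - (P w)^2)) := by
      apply Finset.sum_congr rfl
      intro w _
      ring
    rw [expand, Finset.sum_add_distrib, Finset.sum_sub_distrib, ← Finset.mul_sum,
      ← Finset.mul_sum, Finset.sum_sub_distrib, hB, sub_self, mul_zero, add_zero]
  have norm_key : ∀ i (P : EuclideanSpace ℝ G),
      ‖T i P‖^2 = ‖P‖^2 - p * (1 - p) * ∑ w : G, (P w - P (w * g i))^2 := by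
    intro i P
    rw [← real_inner_self_eq_norm_sq, ← real_inner_self_eq_norm_sq]
    exact key i P
  -- each T i is a contraction
  have step_le : ∀ i (P : EuclideanSpace ℝ G), ‖T i P‖ ≤ ‖P‖ := by
    intro i P
    have h2 : ‖T i P‖^2 ≤ ‖P‖^2 := by
      rw [norm_key]
      have : 0 ≤ p * (1 - p) * ∑ w : G, (P w - P (w * g i))^2 :=
        mul_nonneg hpp.le (Finset.sum_nonneg fun w _ => sq_nonneg _)
      linarith
    have := Real.sqrt_le_sqrt h2
    rwa [Real.sqrt_sq (norm_nonneg _), Real.sqrt_sq (norm_nonneg _)] at this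
  -- equality case
  have step_eq : ∀ i (P : EuclideanSpace ℝ G), ‖T i P‖ = ‖P‖ →
      (∀ w, P (w * g i) = P w) := by
    intro i P h
    have h2 : ‖T i P‖^2 = ‖P‖^2 := by rw [h]
    rw [norm_key] at h2
    have hsum : ∑ w : G, (P w - P (w * g i))^2 = 0 := by
      have hzero : p * (1 - p) * ∑ w : G, (P w - P (w * g i))^2 = 0 := by linarith
      exact (mul_eq_zero.mp hzero).resolve_left (ne_of_gt hpp)
    intro w
    have := (Finset.sum_eq_zero_iff_of_nonneg (fun w _ => sq_nonneg
      (P w - P (w * g i)))).mp hsum w (Finset.mem_univ w)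
    have := pow_eq_zero_iff (n := 2) (by norm_num) |>.mp this
    linarith [sub_eq_zero.mp this]
  have step_fix : ∀ i (P : EuclideanSpace ℝ G), (∀ w, P (w * g i) = P w) → T i P = P := by
    intro i P h
    ext w
    rw [hT, h]
    ring
  set f : EuclideanSpace ℝ G → Fin (d+1) → EuclideanSpace ℝ G := fun Q i => T i Q with hf
  -- contraction along a list
  have foldl_le : ∀ (l : List (Fin (d+1))) (P : EuclideanSpace ℝ G),
      ‖l.foldl f P‖ ≤ ‖P‖ := by
    intro l
    induction l with
    | nil => intro P; simp
    | cons i t ih =>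
        intro P
        calc ‖(i :: t).foldl f P‖ = ‖t.foldl f (T i P)‖ := rfl
          _ ≤ ‖T i P‖ := ih _
          _ ≤ ‖P‖ := step_le i P
  have foldl_eq : ∀ (l : List (Fin (d+1))) (P : EuclideanSpace ℝ G),
      ‖l.foldl f P‖ = ‖P‖ →
      (∀ i ∈ l, ∀ w, P (w * g i) = P w) := by
    intro l
    induction l with
    | nil => intro P _ i hi; simp at hi
    | cons i t ih =>
        intro P h
        have h1 : ‖t.foldl f (T i P)‖ = ‖(i :: t).foldl f P‖ := rfl
        have hTi : ‖T i P‖ = ‖P‖ := by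
          refine le_antisymm (step_le i P) ?_
          calc ‖P‖ = ‖t.foldl f (T i P)‖ := by rw [h1, h]
            _ ≤ ‖T i P‖ := foldl_le t _
        have hfix : ∀ w, P (w * g i) = P w := step_eq i P hTi
        have hTiP : T i P = P := step_fix i P hfix
        intro j hj w
        rcases List.mem_cons.mp hj with hj | hj
        · subst hj; exact hfix w
        · have h2 : ‖t.foldl f P‖ = ‖P‖ := by
            have : t.foldl f P = (i :: t).foldl f P := by
              show t.foldl f P = t.foldl f (T i P)
              rw [hTiP]
            rw [this, h]
          exact ih P h2 j hj w
  -- linearity in the vector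
  have foldl_smul : ∀ (l : List (Fin (d+1))) (a : ℝ) (P : EuclideanSpace ℝ G),
      l.foldl f (a • P) = a • l.foldl f P := by
    intro l
    induction l with
    | nil => intro a P; rfl
    | cons i t ih =>
        intro a P
        show t.foldl f (T i (a • P)) = a • t.foldl f (T i P)
        rw [map_smul, ih]
  have foldl_cont : ∀ (l : List (Fin (d+1))),
      Continuous (fun P : EuclideanSpace ℝ G => l.foldl f P) := by
    intro l
    induction l with
    | nil => exact continuous_id
    | cons i t ih =>
        exact ih.comp (T i).continuous_of_finiteDimensional
  -- the compact set of unit vectors orthogonal to u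
  set K : Set (EuclideanSpace ℝ G) :=
    {P | ⟪P, u⟫ = 0} ∩ Metric.sphere (0 : EuclideanSpace ℝ G) 1 with hK
  have hKclosed : IsClosed {P : EuclideanSpace ℝ G | ⟪P, u⟫ = 0} := by
    have : Continuous (fun P : EuclideanSpace ℝ G => ⟪P, u⟫) :=
      continuous_id.inner continuous_const
    exact isClosed_eq this continuous_const
  have hKcompact : IsCompact K := (isCompact_sphere (0 : EuclideanSpace ℝ G) 1).inter_left hKclosed
  by_cases hne : K.Nonempty
  · obtain ⟨P₀, hP₀K, hP₀max⟩ := hKcompact.exists_isMaxOn hne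
      ((foldl_cont (List.ofFn ι)).norm.continuousOn)
    obtain ⟨hP₀u, hP₀s⟩ := hP₀K
    have hP₀n : ‖P₀‖ = 1 := by simpa using hP₀s
    set c : ℝ := ‖(List.ofFn ι).foldl f P₀‖ with hc
    have hc0 : 0 ≤ c := norm_nonneg _
    have hc1 : c < 1 := by
      rcases lt_or_eq_of_le (by simpa [hP₀n] using foldl_le (List.ofFn ι) P₀ : c ≤ 1) with h | h
      · exact h
      exfalso
      have heq : ‖(List.ofFn ι).foldl f P₀‖ = ‖P₀‖ := by rw [← hc, h, hP₀n]
      have hall : ∀ i : Fin (d+1), ∀ w, P₀ (w * g i) = P₀ w := by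
        intro i w
        obtain ⟨j, hj⟩ := hι i
        exact foldl_eq (List.ofFn ι) P₀ heq i (by
          rw [List.mem_ofFn]; exact ⟨j, hj⟩) w
      -- P₀ is invariant under the whole group
      let H : Subgroup G :=
        { carrier := {h | ∀ w, P₀ (w * h) = P₀ w}
          one_mem' := by intro w; rw [mul_one]
          mul_mem' := by
            intro a b ha hb w
            rw [← mul_assoc, hb (w * a), ha w]
          inv_mem' := by
            intro a ha w
            have h := ha (w * a⁻¹)
            rw [inv_mul_cancel_right] at h
            exact h.symm }
      have hHtop : ∀ h : G, h ∈ H := by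
        have hsub : Set.range g ⊆ (H : Set G) := by
          rintro x ⟨i, rfl⟩
          exact hall i
        have : (⊤ : Subgroup G) ≤ H := hgen ▸ (Subgroup.closure_le H).mpr hsub
        intro h; exact this trivial
      have hconst : ∀ w : G, P₀ w = P₀ 1 := by
        intro w
        have := hHtop w 1
        rwa [one_mul] at this
      have hcard : (0 : ℝ) < (Fintype.card G : ℝ) := by
        exact_mod_cast Fintype.card_pos
      have hinner : ⟪P₀, u⟫ = P₀ 1 := by
        simp only [PiLp.inner_apply, RCLike.inner_apply, starRingEnd_apply, star_trivial, hu]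
        rw [Finset.sum_congr rfl fun w _ => mul_comm (1 / (Fintype.card G : ℝ)) (P₀ w)]
        calc ∑ w : G, P₀ w * (1 / (Fintype.card G : ℝ))
            = ∑ _w : G, P₀ 1 * (1 / (Fintype.card G : ℝ)) := by
              exact Finset.sum_congr rfl fun w _ => by rw [hconst w]
          _ = (Fintype.card G : ℝ) * (P₀ 1 * (1 / (Fintype.card G : ℝ))) := by
              rw [Finset.sum_const, Finset.card_univ, nsmul_eq_mul]
          _ = P₀ 1 := by field_simp
      have hP01 : P₀ 1 = 0 := by rw [← hinner]; exact hP₀u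
      have : P₀ = 0 := by
        ext w
        rw [hconst w, hP01]; rfl
      rw [this] at hP₀n
      simp at hP₀n
    refine ⟨c, hc1, ?_⟩
    intro P hPu
    by_cases hP : P = 0
    · subst hP
      have h0 : (List.ofFn ι).foldl f (0 : EuclideanSpace ℝ G) = 0 := by
        have := foldl_smul (List.ofFn ι) 0 0
        simpa using this
      rw [h0]
      simp
    · set Q : EuclideanSpace ℝ G := ‖P‖⁻¹ • P with hQ
      have hPn : ‖P‖ ≠ 0 := norm_ne_zero_iff.mpr hP
      have hQn : ‖Q‖ = 1 := by
        rw [hQ, norm_smul, norm_inv, norm_norm, inv_mul_cancel₀ hPn]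
      have hQu : ⟪Q, u⟫ = 0 := by
        rw [hQ, real_inner_smul_left, hPu, mul_zero]
      have hQK : Q ∈ K := ⟨hQu, by simpa using hQn⟩
      have hQle : ‖(List.ofFn ι).foldl f Q‖ ≤ c := hP₀max hQK
      have hPQ : P = ‖P‖ • Q := by
        rw [hQ, smul_smul, mul_inv_cancel₀ hPn, one_smul]
      calc ‖(List.ofFn ι).foldl f P‖ = ‖(List.ofFn ι).foldl f (‖P‖ • Q)‖ := by rw [← hPQ]
        _ = ‖P‖ * ‖(List.ofFn ι).foldl f Q‖ := by
            rw [foldl_smul, norm_smul, norm_norm]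
        _ ≤ ‖P‖ * c := by
            exact mul_le_mul_of_nonneg_left hQle (norm_nonneg _)
        _ = c * ‖P‖ := mul_comm _ _
  · refine ⟨1/2, by norm_num, ?_⟩
    intro P hPu
    have hP : P = 0 := by
      by_contra hP
      apply hne
      have hPn : ‖P‖ ≠ 0 := norm_ne_zero_iff.mpr hP
      refine ⟨‖P‖⁻¹ • P, ?_, ?_⟩
      · show ⟪_, u⟫ = 0
        rw [real_inner_smul_left, hPu, mul_zero]
      · simp only [Metric.mem_sphere, dist_zero_right, norm_smul, norm_inv, norm_norm]
        exact inv_mul_cancel₀ hPn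
    subst hP
    have h0 : (List.ofFn ι).foldl f (0 : EuclideanSpace ℝ G) = 0 := by
      have := foldl_smul (List.ofFn ι) 0 0
      simpa using this
    rw [h0]
    simp
end

section
/- Let (X_n)_{n≥0} be random vectors in ℝ^d adapted to a filtration (ℱ_n), and C > 0 a constant with ‖𝔼[X_{k+n₀} | ℱ_{n₀}] − X_{n₀}‖ ≤ C a.s. for all k, n₀. Define f(n) := inf over n₀ of the essential infimum of 𝔼[‖X_{n+n₀} − X_{n₀}‖² | ℱ_{n₀}]. Then for all m, n ≥ 0 with f(m) ≥ C², one has f(n+m) ≥ f(n) + f(m) − 2C·√(f(m)). -/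
open MeasureTheory

open Filter


open MeasureTheory Filter

section helpers
variable {Ω : Type} {m0 : MeasurableSpace Ω} {μ : Measure Ω}

lemma le_essInf_of_ae_le' [IsProbabilityMeasure μ] {g : Ω → ℝ} (hg : Integrable g μ)
    {c : ℝ} (h : ∀ᵐ ω ∂μ, c ≤ g ω) : c ≤ essInf g μ := by
  have hcb : IsCoboundedUnder (· ≥ ·) (ae μ) g := by
    refine ⟨∫ ω, g ω ∂μ, fun a ha => ?_⟩
    have ha' : ∀ᵐ ω ∂μ, a ≤ g ω := eventually_map.mp ha
    calc a = ∫ _, a ∂μ := by simp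
    _ ≤ ∫ ω, g ω ∂μ := integral_mono_ae (integrable_const a) hg ha'
  exact Filter.le_liminf_of_le hcb h

lemma ae_essInf_le_of_nonneg [IsProbabilityMeasure μ] {g : Ω → ℝ}
    (h : ∀ᵐ ω ∂μ, 0 ≤ g ω) : ∀ᵐ ω ∂μ, essInf g μ ≤ g ω :=
  ae_essInf_le (hf := ⟨0, eventually_map.mpr h⟩)

lemma integrable_inner2 {E : Type*} [NormedAddCommGroup E] [InnerProductSpace ℝ E]
    {g h : Ω → E} (hg : MemLp g 2 μ) (hh : MemLp h 2 μ) :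
    Integrable (fun ω => (inner ℝ (g ω) (h ω) : ℝ)) μ := by
  have := L2.integrable_inner (𝕜 := ℝ) (hg.toLp g) (hh.toLp h)
  refine this.congr ?_
  filter_upwards [hg.coeFn_toLp, hh.coeFn_toLp] with ω h1 h2
  rw [h1, h2]
end helpers

lemma condExp_clm {Ω : Type} {m m0 : MeasurableSpace Ω} (hm : m ≤ m0) {μ : Measure Ω}
    [IsProbabilityMeasure μ]
    {E F : Type*} [NormedAddCommGroup E] [NormedSpace ℝ E] [CompleteSpace E]
    [NormedAddCommGroup F] [NormedSpace ℝ F] [CompleteSpace F]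
    (T : E →L[ℝ] F) {g : Ω → E} (hg : Integrable g μ) :
    μ[fun ω => T (g ω)|m] =ᵐ[μ] fun ω => T ((μ[g|m]) ω) := by
  haveI : IsFiniteMeasure (μ.trim hm) := isFiniteMeasure_trim hm
  refine (ae_eq_condExp_of_forall_setIntegral_eq hm (T.integrable_comp hg)
    (fun s hs hμs => (T.integrable_comp integrable_condExp).integrableOn)
    (fun s hs hμs => ?_) ?_).symm
  · rw [T.integral_comp_comm integrable_condExp.integrableOn,
      T.integral_comp_comm hg.integrableOn, setIntegral_condExp hm hg hs]
  · exact (T.continuous.comp_stronglyMeasurable stronglyMeasurable_condExp).aestronglyMeasurable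

set_option maxHeartbeats 1000000 in
/-- Superadditivity-type growth of the conditional second moment for an
almost-martingale: with `f(n) := inf_{n₀} essinf 𝔼[‖X_{n+n₀} − X_{n₀}‖² | ℱ_{n₀}]`,
if `f(m) ≥ C²` then `f(n+m) ≥ f(n) + f(m) − 2C√(f(m))`. -/
theorem stmt9 {Ω : Type} {m0 : MeasurableSpace Ω} (μ : Measure Ω)
    [IsProbabilityMeasure μ] (d : ℕ) (ℱ : Filtration ℕ m0)
    (X : ℕ → Ω → EuclideanSpace ℝ (Fin d))
    (hadapt : StronglyAdapted ℱ X) (hint : ∀ n, Integrable (X n) μ)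
    (hint2 : ∀ n, MemLp (X n) 2 μ)
    (C : ℝ) (hC : 0 < C)
    (hmart : ∀ k n₀, ∀ᵐ ω ∂μ, ‖(μ[X (k + n₀) | ℱ n₀]) ω - X n₀ ω‖ ≤ C)
    (f : ℕ → ℝ)
    (hf : ∀ n, f n = ⨅ n₀ : ℕ,
      essInf (μ[(fun ω => ‖X (n + n₀) ω - X n₀ ω‖ ^ 2) | ℱ n₀]) μ) :
    ∀ m n : ℕ, C ^ 2 ≤ f m →
      f n + f m - 2 * C * Real.sqrt (f m) ≤ f (n + m) := by
  -- sigma-finiteness of trims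
  haveI : ∀ j : ℕ, SigmaFinite (μ.trim (ℱ.le j)) := fun j => by
    haveI := isFiniteMeasure_trim (ℱ.le j) (μ := μ); infer_instance
  -- nonnegativity of the conditional second moments
  have hnn : ∀ (k n₀' : ℕ), ∀ᵐ ω ∂μ,
      0 ≤ (μ[(fun ω => ‖X (k + n₀') ω - X n₀' ω‖ ^ 2) | ℱ n₀']) ω :=
    fun k n₀' => condExp_nonneg (ae_of_all _ fun ω => by positivity)
  -- f k is a.e. below the conditional second moment, for every n₀'
  have hfae : ∀ (k n₀' : ℕ), ∀ᵐ ω ∂μ,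
      f k ≤ (μ[(fun ω => ‖X (k + n₀') ω - X n₀' ω‖ ^ 2) | ℱ n₀']) ω := by
    intro k n₀'
    have hle : f k ≤ essInf (μ[(fun ω => ‖X (k + n₀') ω - X n₀' ω‖ ^ 2) | ℱ n₀']) μ := by
      rw [hf k]
      refine ciInf_le ⟨0, ?_⟩ n₀'
      rintro x ⟨j, rfl⟩
      exact le_essInf_of_ae_le' integrable_condExp (hnn k j)
    filter_upwards [ae_essInf_le_of_nonneg (hnn k n₀')] with ω hω
    exact hle.trans hω
  intro m n hfm
  have hfm0 : (0:ℝ) ≤ f m := le_trans (by positivity) hfm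
  set t := Real.sqrt (f m) with ht
  have ht2 : t ^ 2 = f m := Real.sq_sqrt hfm0
  have htC : C ≤ t := by nlinarith [Real.sqrt_nonneg (f m)]
  have ht0 : (0:ℝ) < t := lt_of_lt_of_le hC htC
  have htne : t ≠ 0 := ne_of_gt ht0
  rw [hf (n + m)]
  refine le_ciInf fun n₀ => ?_
  have hm₀ : ℱ n₀ ≤ m0 := ℱ.le n₀
  have hm₁ : ℱ (m + n₀) ≤ m0 := ℱ.le (m + n₀)
  have hle : ℱ n₀ ≤ ℱ (m + n₀) := ℱ.mono (Nat.le_add_left n₀ m)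
  -- Y and Z, and W := E[Z | ℱ (m+n₀)]
  set Y : Ω → EuclideanSpace ℝ (Fin d) := fun ω => X (m + n₀) ω - X n₀ ω with hYdef
  set Z : Ω → EuclideanSpace ℝ (Fin d) := fun ω => X (n + m + n₀) ω - X (m + n₀) ω with hZdef
  set W : Ω → EuclideanSpace ℝ (Fin d) :=
    fun ω => (μ[X (n + m + n₀) | ℱ (m + n₀)]) ω - X (m + n₀) ω with hWdef
  have hY2 : MemLp Y 2 μ := (hint2 (m + n₀)).sub (hint2 n₀)
  have hZ2 : MemLp Z 2 μ := (hint2 (n + m + n₀)).sub (hint2 (m + n₀))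
  have hIPint : Integrable (fun ω => (inner ℝ (Y ω) (Z ω) : ℝ)) μ := integrable_inner2 hY2 hZ2
  have hY2int : Integrable (fun ω => ‖Y ω‖ ^ 2) μ :=
    (integrable_inner2 hY2 hY2).congr (ae_of_all _ fun ω => real_inner_self_eq_norm_sq _)
  have hZ2int : Integrable (fun ω => ‖Z ω‖ ^ 2) μ :=
    (integrable_inner2 hZ2 hZ2).congr (ae_of_all _ fun ω => real_inner_self_eq_norm_sq _)
  have hW : ∀ᵐ ω ∂μ, ‖W ω‖ ≤ C := by
    have h := hmart n (m + n₀)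
    rw [show n + (m + n₀) = n + m + n₀ from (add_assoc n m n₀).symm] at h
    exact h
  -- measurability of Y w.r.t. ℱ (m+n₀)
  have hYsm : StronglyMeasurable[ℱ (m + n₀)] Y :=
    (hadapt (m + n₀)).sub ((hadapt n₀).mono hle)
  -- pull-out property: E[⟪Y, Z⟫ | ℱ (m+n₀)] = ⟪Y, W⟫ a.e.
  have hZiint : ∀ i : Fin d, Integrable (fun ω => Z ω i) μ := by
    intro i
    have := (EuclideanSpace.proj (𝕜 := ℝ) i).integrable_comp (hZ2.integrable one_le_two)
    exact this
  have hZi : ∀ i : Fin d, μ[(fun ω => Z ω i) | ℱ (m + n₀)] =ᵐ[μ] fun ω => W ω i := by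
    intro i
    have hf1 : Integrable (fun ω => X (n + m + n₀) ω i) μ := by
      have := (EuclideanSpace.proj (𝕜 := ℝ) i).integrable_comp (hint (n + m + n₀))
      exact this
    have hf2 : Integrable (fun ω => X (m + n₀) ω i) μ := by
      have := (EuclideanSpace.proj (𝕜 := ℝ) i).integrable_comp (hint (m + n₀))
      exact this
    have e1 : μ[(fun ω => Z ω i) | ℱ (m + n₀)] =ᵐ[μ]
        μ[(fun ω => X (n + m + n₀) ω i) | ℱ (m + n₀)]
          - μ[(fun ω => X (m + n₀) ω i) | ℱ (m + n₀)] := by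
      have := condExp_sub (μ := μ) (m := ℱ (m + n₀)) hf1 hf2
      exact this
    have e2 : μ[(fun ω => X (n + m + n₀) ω i) | ℱ (m + n₀)] =ᵐ[μ]
        fun ω => (μ[X (n + m + n₀) | ℱ (m + n₀)]) ω i := by
      have := condExp_clm hm₁ (EuclideanSpace.proj (𝕜 := ℝ) i) (hint (n + m + n₀))
      exact this
    have e3 : μ[(fun ω => X (m + n₀) ω i) | ℱ (m + n₀)] = fun ω => X (m + n₀) ω i := by
      refine condExp_of_stronglyMeasurable hm₁ ?_ hf2
      exact (EuclideanSpace.proj (𝕜 := ℝ) i).continuous.comp_stronglyMeasurable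
        (hadapt (m + n₀))
    filter_upwards [e1, e2] with ω e1 e2
    rw [e1, Pi.sub_apply, e2, e3]
    rfl
  have hYi : ∀ i : Fin d, StronglyMeasurable[ℱ (m + n₀)] (fun ω => Y ω i) := fun i =>
    (EuclideanSpace.proj (𝕜 := ℝ) i).continuous.comp_stronglyMeasurable hYsm
  have hYZi : ∀ i : Fin d, Integrable (fun ω => Y ω i * Z ω i) μ := by
    intro i
    have h1 : MemLp (fun ω => Y ω i) 2 μ := (EuclideanSpace.proj (𝕜 := ℝ) i).comp_memLp' hY2
    have h2 : MemLp (fun ω => Z ω i) 2 μ := (EuclideanSpace.proj (𝕜 := ℝ) i).comp_memLp' hZ2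
    have := integrable_inner2 (E := ℝ) h1 h2
    refine this.congr (ae_of_all _ fun ω => ?_)
    simp [RCLike.inner_apply, mul_comm]
  have hmul : ∀ i : Fin d, μ[(fun ω => Y ω i * Z ω i) | ℱ (m + n₀)] =ᵐ[μ]
      fun ω => Y ω i * W ω i := by
    intro i
    have h1 : μ[(fun ω => Y ω i * Z ω i) | ℱ (m + n₀)] =ᵐ[μ]
        (fun ω => Y ω i) * μ[(fun ω => Z ω i) | ℱ (m + n₀)] :=
      condExp_mul_of_stronglyMeasurable_left (hYi i) (hYZi i) (hZiint i)
    filter_upwards [h1, hZi i] with ω h1 h2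
    rw [h1, Pi.mul_apply, h2]
  have hpull : μ[(fun ω => (inner ℝ (Y ω) (Z ω) : ℝ)) | ℱ (m + n₀)] =ᵐ[μ]
      fun ω => (inner ℝ (Y ω) (W ω) : ℝ) := by
    have hsum_eq : (fun ω => (inner ℝ (Y ω) (Z ω) : ℝ)) = fun ω => ∑ i, Y ω i * Z ω i := by
      funext ω
      simp [PiLp.inner_apply, RCLike.inner_apply, mul_comm]
    have e0 : (fun ω => ∑ i, Y ω i * Z ω i)
        = (∑ i : Fin d, fun ω => Y ω i * Z ω i : Ω → ℝ) := by
      funext ω; rw [Finset.sum_apply]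
    have hfin := condExp_finsetSum (μ := μ) (m := ℱ (m + n₀)) (s := Finset.univ)
      (f := fun (i : Fin d) (ω : Ω) => Y ω i * Z ω i) (fun i _ => hYZi i)
    have hall : ∀ᵐ ω ∂μ, ∀ i : Fin d,
        (μ[(fun ω => Y ω i * Z ω i) | ℱ (m + n₀)]) ω = Y ω i * W ω i :=
      ae_all_iff.mpr fun i => hmul i
    rw [hsum_eq, e0]
    filter_upwards [hfin, hall] with ω h1 h2
    rw [h1, Finset.sum_apply]
    calc ∑ i : Fin d, (μ[(fun ω => Y ω i * Z ω i) | ℱ (m + n₀)]) ω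
        = ∑ i : Fin d, Y ω i * W ω i := Finset.sum_congr rfl fun i _ => h2 i
      _ = (inner ℝ (Y ω) (W ω) : ℝ) := by simp [PiLp.inner_apply, RCLike.inner_apply, mul_comm]
  -- pointwise bound on the cross term at level ℱ (m+n₀)
  have hcross1 : (fun ω => -(C * t / 2) - C / (2 * t) * ‖Y ω‖ ^ 2) ≤ᵐ[μ]
      μ[(fun ω => (inner ℝ (Y ω) (Z ω) : ℝ)) | ℱ (m + n₀)] := by
    filter_upwards [hpull, hW] with ω h1 h2
    rw [h1]
    have h3 : |(inner ℝ (Y ω) (W ω) : ℝ)| ≤ ‖Y ω‖ * C :=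
      (abs_real_inner_le_norm _ _).trans
        (mul_le_mul_of_nonneg_left h2 (norm_nonneg _))
    have key : 2 * t * ‖Y ω‖ ≤ t ^ 2 + ‖Y ω‖ ^ 2 := by nlinarith [sq_nonneg (t - ‖Y ω‖)]
    have hcd : (0:ℝ) < 2 * t := by linarith
    have h4 : ‖Y ω‖ * C ≤ C * t / 2 + C / (2 * t) * ‖Y ω‖ ^ 2 := by
      have h5 := mul_le_mul_of_nonneg_left key (le_of_lt (div_pos hC hcd))
      calc ‖Y ω‖ * C = C / (2 * t) * (2 * t * ‖Y ω‖) := by field_simp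
        _ ≤ C / (2 * t) * (t ^ 2 + ‖Y ω‖ ^ 2) := h5
        _ = C * t / 2 + C / (2 * t) * ‖Y ω‖ ^ 2 := by field_simp
    have h6 := (abs_le.mp h3).1
    linarith
  -- the cross term at level ℱ n₀
  have hcross2 : ∀ᵐ ω ∂μ,
      -(C * t / 2) - C / (2 * t) * (μ[(fun ω => ‖Y ω‖ ^ 2) | ℱ n₀]) ω
        ≤ (μ[(fun ω => (inner ℝ (Y ω) (Z ω) : ℝ)) | ℱ n₀]) ω := by
    have hLint : Integrable (fun ω => -(C * t / 2) - C / (2 * t) * ‖Y ω‖ ^ 2) μ :=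
      (integrable_const (-(C * t / 2))).sub (hY2int.const_mul _)
    have hmono := condExp_mono (m := ℱ n₀) hLint integrable_condExp hcross1
    have hmono' : μ[((fun _ : Ω => -(C * t / 2)) - (C / (2 * t)) • fun ω => ‖Y ω‖ ^ 2 : Ω → ℝ)
          | ℱ n₀] ≤ᵐ[μ]
        μ[μ[(fun ω => (inner ℝ (Y ω) (Z ω) : ℝ)) | ℱ (m + n₀)] | ℱ n₀] := hmono
    have htower := condExp_condExp_of_le
      (f := fun ω => (inner ℝ (Y ω) (Z ω) : ℝ)) (μ := μ) hle hm₁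
    have h5 := condExp_sub (μ := μ) (m := ℱ n₀) (f := fun _ : Ω => -(C * t / 2))
      (g := (C / (2 * t)) • fun ω => ‖Y ω‖ ^ 2) (integrable_const _) (hY2int.smul _)
    have h6 := condExp_smul (μ := μ) (m := ℱ n₀) (C / (2 * t)) (fun ω => ‖Y ω‖ ^ 2)
    filter_upwards [hmono', htower, h5, h6] with ω e1 e2 e3 e4
    rw [e2] at e1
    rw [e3, Pi.sub_apply, condExp_const hm₀, e4, Pi.smul_apply, smul_eq_mul] at e1
    linarith
  -- lower bound for E[‖Z‖² | ℱ n₀]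
  have hD : ∀ᵐ ω ∂μ, (f n : ℝ) ≤ (μ[(fun ω => ‖Z ω‖ ^ 2) | ℱ n₀]) ω := by
    have h1 : (fun _ : Ω => (f n : ℝ)) ≤ᵐ[μ] μ[(fun ω => ‖Z ω‖ ^ 2) | ℱ (m + n₀)] := by
      have h := hfae n (m + n₀)
      rw [show n + (m + n₀) = n + m + n₀ from (add_assoc n m n₀).symm] at h
      exact h
    have h2 := condExp_mono (m := ℱ n₀) (integrable_const (f n)) integrable_condExp h1
    have h3 := condExp_condExp_of_le (f := fun ω => ‖Z ω‖ ^ 2) (μ := μ) hle hm₁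
    rw [condExp_const hm₀] at h2
    filter_upwards [h2, h3] with ω e2 e3
    rw [← e3]
    exact e2
  -- lower bound for E[‖Y‖² | ℱ n₀]
  have hA : ∀ᵐ ω ∂μ, (f m : ℝ) ≤ (μ[(fun ω => ‖Y ω‖ ^ 2) | ℱ n₀]) ω := hfae m n₀
  -- decomposition of the conditional second moment
  have hdecomp : μ[(fun ω => ‖X (n + m + n₀) ω - X n₀ ω‖ ^ 2) | ℱ n₀] =ᵐ[μ]
      fun ω => (μ[(fun ω => ‖Y ω‖ ^ 2) | ℱ n₀]) ω
        + 2 * (μ[(fun ω => (inner ℝ (Y ω) (Z ω) : ℝ)) | ℱ n₀]) ω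
        + (μ[(fun ω => ‖Z ω‖ ^ 2) | ℱ n₀]) ω := by
    have hptw : (fun ω => ‖X (n + m + n₀) ω - X n₀ ω‖ ^ 2)
        = ((fun ω => ‖Y ω‖ ^ 2) + ((2 : ℝ) • fun ω => (inner ℝ (Y ω) (Z ω) : ℝ))
           + fun ω => ‖Z ω‖ ^ 2 : Ω → ℝ) := by
      funext ω
      have hYZ : X (n + m + n₀) ω - X n₀ ω = Y ω + Z ω := by
        show X (n + m + n₀) ω - X n₀ ω
          = (X (m + n₀) ω - X n₀ ω) + (X (n + m + n₀) ω - X (m + n₀) ω)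
        abel
      simp only [Pi.add_apply, Pi.smul_apply, smul_eq_mul]
      rw [hYZ, norm_add_sq_real]
    rw [hptw]
    have e1 := condExp_add (μ := μ) (m := ℱ n₀)
      (hY2int.add (hIPint.smul (2 : ℝ))) hZ2int
    have e2 := condExp_add (μ := μ) (m := ℱ n₀) hY2int (hIPint.smul (2 : ℝ))
    have e3 := condExp_smul (μ := μ) (m := ℱ n₀) (2 : ℝ)
      (fun ω => (inner ℝ (Y ω) (Z ω) : ℝ))
    filter_upwards [e1, e2, e3] with ω e1 e2 e3
    rw [e1, Pi.add_apply, e2, Pi.add_apply, e3, Pi.smul_apply, smul_eq_mul]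
  -- conclude
  refine le_essInf_of_ae_le' integrable_condExp ?_
  filter_upwards [hdecomp, hA, hD, hcross2] with ω h1 h2 h3 h4
  rw [h1]
  have hu : 2 * (C / (2 * t)) = C / t := by field_simp
  have hu2 : C / t ≤ 1 := (div_le_one ht0).mpr htC
  have hu0 : 0 ≤ C / (2 * t) := by positivity
  have key : 0 ≤ (1 - C / t) * ((μ[(fun ω => ‖Y ω‖ ^ 2) | ℱ n₀]) ω - t ^ 2) := by
    have := hfm.trans h2
    nlinarith
  have hct : C / (2 * t) * (2 * t) = C := by field_simp
  nlinarith [h4, h3, h2]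
end
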